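/- Let A ∈ ℝ^{m×n} and b ∈ ℝ^m with Ω = {x ∈ ℝ^n : A x = b} nonempty, let s := min{‖x‖_0 : x ∈ Ω} and ε_0 := inf{|x|_{(s)} : x ∈ Ω} > 0, where |x|_{(s)} is the s-th largest component of |x|. Let U = [0,1]^n and g(u) = Σ_{i=1}^n g_i(u_i), where each g_i : [0,1] → ℝ is differentiable with bounded derivative on [0,1], strictly decreasing on [0,1], g_i(0) = 0 and g_i(1) = -1 (a Type B function). Then there exists α > 0 such that the joint minimization min_{x ∈ Ω, u ∈ U} (⟨u, |x|⟩ + α g(u)) is equivalent to min_{x ∈ Ω} ‖x‖_0: (a) if (x*, u*) is a minimizer of the joint problem, then ‖x*‖_0 = s, so x* is a minimizer of the ℓ0 problem; and (b) conversely, if x* ∈ Ω has ‖x*‖_0 = s, then taking u*_i = 1 when x*_i = 0 and u*_i = 0 otherwise gives a minimizer (x*, u*) of the joint problem, whose minimum value is -α(n - s). -/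

import Mathlib

/-- The number of nonzero components of `x` (the ℓ0 "norm"). -/
noncomputable def l0norm {n : ℕ} (x : Fin n → ℝ) : ℕ :=
  (Finset.univ.filter fun i => x i ≠ 0).card

/-- The `s`-th largest component of `|x|`: the largest threshold `t` such that at least `s`
components of `|x|` are `≥ t`. -/
noncomputable def sthLargest {n : ℕ} (x : Fin n → ℝ) (s : ℕ) : ℝ :=
  sSup {t : ℝ | s ≤ (Finset.univ.filter fun i => t ≤ |x i|).card}

/-- Exact recovery for Type B lifting functions: for `U = [0,1]^n` and `g` separable with each
`g_i` having bounded derivative on `[0,1]`, strictly decreasing, `g_i(0) = 0`, `g_i(1) = -1`,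
there exists `α > 0` such that the joint minimization
`min_{Ax = b, u ∈ U} (⟨u, |x|⟩ + α g(u))` is equivalent to `min_{Ax = b} ‖x‖₀`. -/
theorem typeB_exact_recovery {m n : ℕ} (A : Matrix (Fin m) (Fin n) ℝ) (b : Fin m → ℝ)
    (g : Fin n → ℝ → ℝ)
    (hdiff : ∀ i, DifferentiableOn ℝ (g i) (Set.Icc 0 1))
    (hbdd : ∀ i, ∃ M : ℝ, ∀ t ∈ Set.Icc (0 : ℝ) 1,
      |derivWithin (g i) (Set.Icc 0 1) t| ≤ M)
    (hdec : ∀ i, StrictAntiOn (g i) (Set.Icc 0 1))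
    (h0 : ∀ i, g i 0 = 0) (h1 : ∀ i, g i 1 = -1)
    (s : ℕ) (hspos : 0 < s) (hsn : s ≤ n)
    (hs : IsLeast {k : ℕ | ∃ x : Fin n → ℝ, A.mulVec x = b ∧ l0norm x = k} s)
    (ε₀ : ℝ) (hε₀ : IsGLB ((fun x => sthLargest x s) '' {x : Fin n → ℝ | A.mulVec x = b}) ε₀)
    (hε₀pos : 0 < ε₀) :
    ∃ α > (0 : ℝ),
      -- (a) every minimizer (x*, u*) of the joint problem has ‖x*‖₀ = s
      (∀ x u : Fin n → ℝ, A.mulVec x = b → (∀ i, u i ∈ Set.Icc (0 : ℝ) 1) →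
        (∀ x' u' : Fin n → ℝ, A.mulVec x' = b → (∀ i, u' i ∈ Set.Icc (0 : ℝ) 1) →
          (∑ i, u i * |x i|) + α * ∑ i, g i (u i) ≤
            (∑ i, u' i * |x' i|) + α * ∑ i, g i (u' i)) →
        l0norm x = s) ∧
      -- (b) conversely, every s-sparse feasible x* together with the indicator weights
      -- u*_i = 1 if x*_i = 0, u*_i = 0 otherwise, is a minimizer with value -α(n-s)
      (∀ x : Fin n → ℝ, A.mulVec x = b → l0norm x = s →
        (∀ i, (if x i = 0 then (1 : ℝ) else 0) ∈ Set.Icc (0 : ℝ) 1) ∧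
        (∀ x' u' : Fin n → ℝ, A.mulVec x' = b → (∀ i, u' i ∈ Set.Icc (0 : ℝ) 1) →
          (∑ i, (if x i = 0 then (1 : ℝ) else 0) * |x i|) +
              α * ∑ i, g i (if x i = 0 then (1 : ℝ) else 0) ≤
            (∑ i, u' i * |x' i|) + α * ∑ i, g i (u' i)) ∧
        (∑ i, (if x i = 0 then (1 : ℝ) else 0) * |x i|) +
            α * ∑ i, g i (if x i = 0 then (1 : ℝ) else 0) = -α * ((n : ℝ) - s)) := by
  classical
  choose M hM using hbdd
  set K : ℝ := 1 + ∑ j, |M j| with hKdef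
  have hsumM : (0:ℝ) ≤ ∑ j, |M j| := Finset.sum_nonneg fun j _ => abs_nonneg _
  have hK1 : (1:ℝ) ≤ K := le_add_of_nonneg_right hsumM
  have hK0 : (0:ℝ) < K := lt_of_lt_of_le one_pos hK1
  have hKM : ∀ i, M i ≤ K := by
    intro i
    have h1 : |M i| ≤ ∑ j, |M j| :=
      Finset.single_le_sum (fun j _ => abs_nonneg (M j)) (Finset.mem_univ i)
    have := le_abs_self (M i)
    simp only [hKdef]; linarith
  set ε : ℝ := ε₀ / 2 with hεdef
  have hε : 0 < ε := by positivity
  set α : ℝ := ε / K with hαdef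
  have hα : 0 < α := by positivity
  have hαK : α * K = ε := by rw [hαdef]; field_simp [hK0.ne']
  -- bounds on g
  have hg_ge : ∀ i, ∀ u ∈ Set.Icc (0:ℝ) 1, -1 ≤ g i u := by
    intro i u hu
    rcases eq_or_lt_of_le hu.2 with h | h
    · rw [h, h1 i]
    · have := hdec i hu (Set.mem_Icc.mpr ⟨zero_le_one, le_refl 1⟩) h
      rw [h1 i] at this; linarith
  have hg_lip : ∀ i, ∀ u ∈ Set.Icc (0:ℝ) 1, -(K * u) ≤ g i u := by
    intro i u hu
    have hb : ∀ t ∈ Set.Icc (0:ℝ) 1, ‖derivWithin (g i) (Set.Icc 0 1) t‖ ≤ K := by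
      intro t ht
      rw [Real.norm_eq_abs]
      exact le_trans (hM i t ht) (hKM i)
    have h := Convex.norm_image_sub_le_of_norm_derivWithin_le (hdiff i) hb (convex_Icc 0 1)
      (Set.mem_Icc.mpr ⟨le_refl 0, zero_le_one⟩) hu
    rw [Real.norm_eq_abs, Real.norm_eq_abs, h0 i, sub_zero, sub_zero,
      abs_of_nonneg hu.1] at h
    have := abs_le.mp h
    linarith [this.1]
  -- threshold: every feasible x has at least s entries with |x i| ≥ ε
  have hthresh : ∀ x : Fin n → ℝ, A.mulVec x = b →
      s ≤ (Finset.univ.filter fun i => ε ≤ |x i|).card := by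
    intro x hx
    by_contra hc
    push_neg at hc
    have hub : ∀ t ∈ {t : ℝ | s ≤ (Finset.univ.filter fun i => t ≤ |x i|).card}, t ≤ ε := by
      intro t ht
      by_contra hgt
      push_neg at hgt
      have hsub : (Finset.univ.filter fun i => t ≤ |x i|) ⊆
          (Finset.univ.filter fun i => ε ≤ |x i|) := by
        intro i hi
        simp only [Finset.mem_filter, Finset.mem_univ, true_and] at hi ⊢
        linarith
      have := Finset.card_le_card hsub
      have ht' : s ≤ (Finset.univ.filter fun i => t ≤ |x i|).card := ht
      omega
    have hsup : sthLargest x s ≤ ε := Real.sSup_le hub hε.le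
    have hge : ε₀ ≤ sthLargest x s := hε₀.1 (Set.mem_image_of_mem _ hx)
    rw [hεdef] at hsup
    linarith
  -- value of the objective at an s-sparse point with indicator weights
  have hval : ∀ x : Fin n → ℝ, l0norm x = s →
      (∑ i, (if x i = 0 then (1:ℝ) else 0) * |x i|) +
        α * ∑ i, g i (if x i = 0 then (1:ℝ) else 0) = -α * ((n:ℝ) - s) := by
    intro x hl0
    have h1sum : ∑ i, (if x i = 0 then (1:ℝ) else 0) * |x i| = 0 :=
      Finset.sum_eq_zero (by intro i _; split <;> simp_all)
    have h2 : ∀ i, g i (if x i = 0 then (1:ℝ) else 0) = if x i = 0 then (-1:ℝ) else 0 := by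
      intro i; split <;> simp [h0, h1]
    have hcard : (Finset.univ.filter fun i => x i = 0).card = n - s := by
      have hsplit := Finset.card_filter_add_card_filter_not
        (s := (Finset.univ : Finset (Fin n))) (p := fun i => x i ≠ 0)
      have hcongr : (Finset.univ.filter fun i => ¬ x i ≠ 0) =
          (Finset.univ.filter fun i => x i = 0) := by
        apply Finset.filter_congr; intro i _; simp
      rw [hcongr] at hsplit
      have : l0norm x = (Finset.univ.filter fun i => x i ≠ 0).card := rfl
      simp only [Finset.card_univ, Fintype.card_fin] at hsplit
      omega
    have h3 : ∑ i, g i (if x i = 0 then (1:ℝ) else 0) = -((n:ℝ) - s) := by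
      calc ∑ i, g i (if x i = 0 then (1:ℝ) else 0)
          = ∑ i, (if x i = 0 then (-1:ℝ) else 0) := by
            exact Finset.sum_congr rfl fun i _ => h2 i
        _ = -((Finset.univ.filter fun i => x i = 0).card : ℝ) := by
            rw [Finset.sum_ite, Finset.sum_const, Finset.sum_const]
            simp
        _ = -((n:ℝ) - s) := by
            rw [hcard]
            have : ((n - s : ℕ) : ℝ) = (n:ℝ) - s := by
              push_cast [Nat.cast_sub hsn]; ring
            rw [this]
    rw [h1sum, h3]; ring
  -- main key lemma: lower bound and equality case
  have key : ∀ (x u : Fin n → ℝ), A.mulVec x = b → (∀ i, u i ∈ Set.Icc (0:ℝ) 1) →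
      (-α * ((n:ℝ) - s) ≤ (∑ i, u i * |x i|) + α * ∑ i, g i (u i)) ∧
      ((∑ i, u i * |x i|) + α * ∑ i, g i (u i) ≤ -α * ((n:ℝ) - s) → l0norm x = s) := by
    intro x u hx hu
    set S := (Finset.univ.filter fun i => ε ≤ |x i|) with hSdef
    have hsS : s ≤ S.card := hthresh x hx
    have hSn : S.card ≤ n := by
      have := Finset.card_filter_le (Finset.univ : Finset (Fin n)) (fun i => ε ≤ |x i|)
      simpa using this
    set P : Fin n → ℝ := fun i => u i * |x i| + α * g i (u i) with hPdef
    have hterm1 : ∀ i, -α ≤ P i := by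
      intro i
      have h1' := (hu i).1
      have h2' := hg_ge i (u i) (hu i)
      have h3' : 0 ≤ u i * |x i| := mul_nonneg h1' (abs_nonneg _)
      have h4' : α * (-1) ≤ α * g i (u i) := by
        apply mul_le_mul_of_nonneg_left h2' hα.le
      simp only [hPdef]; linarith
    have hterm2 : ∀ i ∈ S, 0 ≤ P i := by
      intro i hi
      simp only [hSdef, Finset.mem_filter, Finset.mem_univ, true_and] at hi
      have hlip := hg_lip i (u i) (hu i)
      have h1' := (hu i).1
      have e1 : u i * ε ≤ u i * |x i| := mul_le_mul_of_nonneg_left hi h1'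
      have e2 : α * (-(K * u i)) ≤ α * g i (u i) := mul_le_mul_of_nonneg_left hlip hα.le
      have e3 : α * (-(K * u i)) = -(ε * u i) := by rw [← hαK]; ring
      simp only [hPdef]; nlinarith
    have hsplit : (∑ i, u i * |x i|) + α * ∑ i, g i (u i) = ∑ i, P i := by
      simp only [hPdef, Finset.mul_sum, Finset.sum_add_distrib]
    have hsum_eq : ∑ i ∈ S, P i + ∑ i ∈ Sᶜ, P i = ∑ i, P i :=
      Finset.sum_add_sum_compl S P
    have hSle : 0 ≤ ∑ i ∈ S, P i := Finset.sum_nonneg hterm2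
    have hScle : (Sᶜ.card : ℝ) * (-α) ≤ ∑ i ∈ Sᶜ, P i := by
      have := Finset.card_nsmul_le_sum Sᶜ P (-α) (fun i _ => hterm1 i)
      rwa [nsmul_eq_mul] at this
    have hccard : (Sᶜ.card : ℝ) = (n:ℝ) - S.card := by
      rw [Finset.card_compl, Fintype.card_fin, Nat.cast_sub hSn]
    have hsR : (s:ℝ) ≤ (S.card : ℝ) := by exact_mod_cast hsS
    constructor
    · rw [hsplit, ← hsum_eq]
      have : -α * ((n:ℝ) - S.card) ≤ ∑ i ∈ Sᶜ, P i := by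
        rw [← hccard]; linarith
      nlinarith [mul_nonneg hα.le (sub_nonneg.mpr hsR)]
    · intro hle
      rw [hsplit, ← hsum_eq] at hle
      -- S.card = s
      have hcard_eq : (S.card : ℝ) = (s:ℝ) := by
        by_contra hne
        have hlt : (s:ℝ) < S.card := lt_of_le_of_ne hsR (Ne.symm hne)
        nlinarith [hScle, hSle, hccard]
      have hScard : S.card = s := by exact_mod_cast hcard_eq
      -- each term in Sᶜ equals -α
      have hQ : ∀ i ∈ Sᶜ, 0 ≤ P i + α := fun i _ => by linarith [hterm1 i]
      have hQsum : ∑ i ∈ Sᶜ, (P i + α) ≤ 0 := by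
        rw [Finset.sum_add_distrib, Finset.sum_const, nsmul_eq_mul]
        have : ∑ i ∈ Sᶜ, P i ≤ -α * ((n:ℝ) - s) := by linarith
        rw [hccard, hcard_eq]
        linarith
      have hall := (Finset.sum_eq_zero_iff_of_nonneg hQ).mp
        (le_antisymm hQsum (Finset.sum_nonneg hQ))
      -- off S, x vanishes
      have hzero : ∀ i, i ∉ S → x i = 0 := by
        intro i hiS
        have hiSc : i ∈ Sᶜ := Finset.mem_compl.mpr hiS
        have hPi : P i = -α := by linarith [hall i hiSc]
        have h1' := (hu i).1
        have h2' := hg_ge i (u i) (hu i)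
        have h3' : 0 ≤ u i * |x i| := mul_nonneg h1' (abs_nonneg _)
        have h4' : α * (-1) ≤ α * g i (u i) := mul_le_mul_of_nonneg_left h2' hα.le
        have hux : u i * |x i| = 0 := by simp only [hPdef] at hPi; linarith
        have hgi : g i (u i) = -1 := by
          have : α * g i (u i) = α * (-1) := by simp only [hPdef] at hPi; linarith
          have := mul_left_cancel₀ (ne_of_gt hα) this
          linarith
        have hui : u i = 1 := by
          by_contra hne1
          have hlt1 : u i < 1 := lt_of_le_of_ne (hu i).2 hne1
          have := hdec i (hu i) (Set.mem_Icc.mpr ⟨zero_le_one, le_refl 1⟩) hlt1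
          rw [h1 i, hgi] at this
          exact lt_irrefl _ this
        rw [hui, one_mul] at hux
        exact abs_eq_zero.mp hux
      have hfe : (Finset.univ.filter fun i => x i ≠ 0) = S := by
        ext i
        simp only [Finset.mem_filter, Finset.mem_univ, true_and, hSdef]
        constructor
        · intro hne
          by_contra hnot
          exact hne (hzero i (by simp [hSdef, hnot]))
        · intro hle'
          intro h0'
          rw [h0'] at hle'
          simp only [abs_zero] at hle'
          linarith
      show (Finset.univ.filter fun i => x i ≠ 0).card = s
      rw [hfe, hScard]
  refine ⟨α, hα, ?_, ?_⟩
  · -- (a)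
    intro x u hx hu hmin
    obtain ⟨x₀, hx₀, hl₀⟩ := hs.1
    have hu₀ : ∀ i, (if x₀ i = 0 then (1:ℝ) else 0) ∈ Set.Icc (0:ℝ) 1 := by
      intro i; split <;> constructor <;> norm_num
    have h := hmin x₀ _ hx₀ hu₀
    rw [hval x₀ hl₀] at h
    exact (key x u hx hu).2 h
  · -- (b)
    intro x hx hl0
    have humem : ∀ i, (if x i = 0 then (1:ℝ) else 0) ∈ Set.Icc (0:ℝ) 1 := by
      intro i; split <;> constructor <;> norm_num
    refine ⟨humem, ?_, hval x hl0⟩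
    intro x' u' hx' hu'
    rw [hval x hl0]
    exact (key x' u' hx' hu').1
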